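/- Let G be a finite solvable group and b ∈ G an element of prime order p. If p does not divide the order of the Fitting subgroup F(G), then there exists a nontrivial element x ∈ F(G) such that bx has order p. -/

import Mathlib

/-- The Fitting subgroup of `G`: the join of all nilpotent normal subgroups. -/
def fittingSubgroup (G : Type*) [Group G] : Subgroup G :=
  sSup {H : Subgroup G | H.Normal ∧ Group.IsNilpotent H}

open Subgroup
open scoped commutatorElement

lemma fittingSubgroup_normal (G : Type*) [Group G] : (fittingSubgroup G).Normal := by
  constructor
  intro x hx g
  have key : Subgroup.map (MulAut.conj g).toMonoidHom (fittingSubgroup G) ≤ fittingSubgroup G := by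
    rw [fittingSubgroup, (Subgroup.gc_map_comap _).l_sSup]
    refine iSup_le fun H => iSup_le fun hH => ?_
    rintro y ⟨h, hh, rfl⟩
    exact le_sSup hH (by simpa using hH.1.conj_mem h hh g)
  have : (MulAut.conj g).toMonoidHom x ∈ fittingSubgroup G := key ⟨x, hx, rfl⟩
  simpa using this

lemma comm_aux {M : Type*} [Group M] {d₁ z₁ d₂ z₂ : M}
    (h1 : z₁ * d₂ = d₂ * z₁) (h2 : z₁ * z₂ = z₂ * z₁) (h3 : z₂ * d₁ = d₁ * z₂) :
    ⁅d₁ * z₁, d₂ * z₂⁆ = ⁅d₁, d₂⁆ := by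
  have c3 : Commute z₂ d₁ := h3
  have c3' : z₂ * d₁⁻¹ = d₁⁻¹ * z₂ := c3.inv_right.eq
  simp only [commutatorElement_def, mul_inv_rev, mul_assoc]
  rw [← mul_assoc z₁ d₂, h1, mul_assoc, ← mul_assoc z₁ z₂, h2, mul_assoc,
    mul_inv_cancel_left, ← mul_assoc z₂ d₁⁻¹, c3', mul_assoc, mul_inv_cancel_left]

theorem centralizer_fitting_le (G : Type*) [Group G] (hsolv : IsSolvable G) :
    Subgroup.centralizer (fittingSubgroup G : Set G) ≤ fittingSubgroup G := by
  set F : Subgroup G := fittingSubgroup G with hFdef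
  haveI hFn : F.Normal := fittingSubgroup_normal G
  set C : Subgroup G := Subgroup.centralizer (F : Set G) with hCdef
  haveI hCn : C.Normal := by
    constructor
    intro c hc g
    rw [hCdef, mem_centralizer_iff]
    intro f hf
    have h1 : g⁻¹ * f * g ∈ F := by simpa using hFn.conj_mem f hf g⁻¹
    have h2 : (g⁻¹ * f * g) * c = c * (g⁻¹ * f * g) := mem_centralizer_iff.mp hc _ h1
    have h3 := congrArg (fun t => g * t * g⁻¹) h2
    simpa [mul_assoc] using h3
  haveI hZn : (C ⊓ F).Normal := by
    constructor
    intro z hz g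
    exact ⟨hCn.conj_mem z hz.1 g, hFn.conj_mem z hz.2 g⟩
  -- the derived series of C, pushed into G
  set D : ℕ → Subgroup G := fun n => (derivedSeries C n).map C.subtype with hDdef
  have hD0 : D 0 = C := by
    rw [hDdef]
    simp only [derivedSeries_zero, ← MonoidHom.range_eq_map, range_subtype]
  have hDsucc : ∀ n, D (n + 1) = ⁅D n, D n⁆ := by
    intro n
    rw [hDdef]
    simp only [derivedSeries_succ, Subgroup.map_commutator]
  have hDle : ∀ n, D n ≤ C := fun n => map_subtype_le _
  have hDn : ∀ n, (D n).Normal := by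
    intro n
    induction n with
    | zero => rw [hD0]; exact hCn
    | succ n ih => rw [hDsucc]; exact @Subgroup.commutator_normal G _ (D n) (D n) ih ih
  have hzc : ∀ z ∈ C ⊓ F, ∀ a ∈ C, z * a = a * z := by
    intro z hz a ha
    exact mem_centralizer_iff.mp ha z hz.2
  have key : ∀ j, D (j + 1) ≤ C ⊓ F → D j ≤ C ⊓ F := by
    intro j hj
    set A : Subgroup G := D j ⊔ (C ⊓ F) with hAdef
    have hAC : A ≤ C := sup_le (hDle j) inf_le_left
    have hcomm : ∀ a₁ ∈ A, ∀ a₂ ∈ A, ⁅a₁, a₂⁆ ∈ C ⊓ F := by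
      intro a₁ h₁ a₂ h₂
      rw [hAdef, ← SetLike.mem_coe, Subgroup.mul_normal] at h₁ h₂
      obtain ⟨d₁, hd₁, z₁, hz₁, rfl⟩ := h₁
      obtain ⟨d₂, hd₂, z₂, hz₂, rfl⟩ := h₂
      have e : ⁅d₁ * z₁, d₂ * z₂⁆ = ⁅d₁, d₂⁆ :=
        comm_aux (hzc z₁ hz₁ d₂ (hDle j hd₂)) (hzc z₁ hz₁ z₂ hz₂.1) (hzc z₂ hz₂ d₁ (hDle j hd₁))
      rw [e]
      exact hj ((hDsucc j) ▸ commutator_mem_commutator hd₁ hd₂)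
    haveI hAnormal : A.Normal := by
      haveI := hDn j
      exact Subgroup.sup_normal (D j) (C ⊓ F)
    have hnilp : Group.IsNilpotent A := by
      rw [_root_.nilpotent_iff_lowerCentralSeries]
      refine ⟨2, ?_⟩
      have h1 : (⊤ : Subgroup A).lowerCentralSeries 1 ≤ (C ⊓ F).subgroupOf A := by
        show ⁅(⊤ : Subgroup A), ⊤⁆ ≤ _
        rw [commutator_le]
        intro g₁ _ g₂ _
        rw [mem_subgroupOf]
        have : ((⁅g₁, g₂⁆ : A) : G) = ⁅(g₁ : G), (g₂ : G)⁆ := by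
          simp [commutatorElement_def]
        rw [this]
        exact hcomm _ g₁.2 _ g₂.2
      have h2 : (⊤ : Subgroup A).lowerCentralSeries 2 ≤ ⊥ := by
        show ⁅(⊤ : Subgroup A).lowerCentralSeries 1, (⊤ : Subgroup A)⁆ ≤ ⊥
        refine le_trans (commutator_mono h1 le_rfl) ?_
        rw [commutator_le]
        intro z hz a _
        rw [Subgroup.mem_bot, commutatorElement_eq_one_iff_commute]
        have := hzc (z : G) (mem_subgroupOf.mp hz) (a : G) (hAC a.2)
        exact Subtype.ext (by push_cast; exact this)
      exact le_bot_iff.mp h2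
    have hAF : A ≤ F := le_sSup ⟨hAnormal, hnilp⟩
    exact le_inf (hDle j) (le_trans le_sup_left hAF)
  obtain ⟨n, hn⟩ := (haveI : Group.IsSolvable G := hsolv; (inferInstance : Group.IsSolvable C)).solvable
  have hbase : D n ≤ C ⊓ F := by
    rw [hDdef]
    simp only [hn]
    simp
  have down : ∀ m, D m ≤ C ⊓ F → D 0 ≤ C ⊓ F := by
    intro m
    induction m with
    | zero => exact id
    | succ m ih => exact fun h => ih (key m h)
  have := down n hbase
  rw [hD0] at this
  exact le_trans this inf_le_right

theorem stmt_2 {G : Type} [Group G] [Finite G] (hsolv : IsSolvable G)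
    {p : ℕ} (hp : p.Prime) (b : G) (hb : orderOf b = p)
    (hF : ¬ p ∣ Nat.card (fittingSubgroup G)) :
    ∃ x ∈ fittingSubgroup G, x ≠ 1 ∧ orderOf (b * x) = p := by
  set F : Subgroup G := fittingSubgroup G with hFdef
  haveI hFn : F.Normal := fittingSubgroup_normal G
  have hbF : b ∉ F := by
    intro h
    apply hF
    have h1 : orderOf (⟨b, h⟩ : F) ∣ Nat.card F := orderOf_dvd_natCard _
    rwa [Subgroup.orderOf_mk, hb] at h1
  obtain ⟨y, hyF, hyb⟩ : ∃ y ∈ F, ¬ (y * b = b * y) := by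
    by_contra hcon
    push_neg at hcon
    exact hbF (centralizer_fitting_le G hsolv (mem_centralizer_iff.mpr hcon))
  refine ⟨b⁻¹ * (y * b * y⁻¹), ?_, ?_, ?_⟩
  · have h1 : b⁻¹ * y * b ∈ F := by simpa using hFn.conj_mem y hyF b⁻¹
    have e : b⁻¹ * (y * b * y⁻¹) = (b⁻¹ * y * b) * y⁻¹ := by group
    rw [e]
    exact F.mul_mem h1 (F.inv_mem hyF)
  · intro hx
    apply hyb
    have : y * b * y⁻¹ = b := by
      have := congrArg (fun t => b * t) hx
      simpa [mul_assoc] using this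
    calc y * b = (y * b * y⁻¹) * y := by group
    _ = b * y := by rw [this]
  · have e : b * (b⁻¹ * (y * b * y⁻¹)) = y * b * y⁻¹ := by group
    rw [e]
    have : orderOf (MulAut.conj y b) = orderOf b := (MulAut.conj y).orderOf_eq b
    simpa [MulAut.conj_apply, hb] using this
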